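/- For the 24-cell graph Γ_P with moves m_1 = {1,3,6,8,10,12,13,15}, m_2 = {2,4,5,7,9,11,14,16}, m_3 = {17,…,24} acting on states by symmetric difference, and starting state S = {1,2,4,6,12,14,15,16,17,18,19,20}, every state in the orbit {S, m_1S, m_2S, m_3S, m_1m_2S, m_1m_3S, m_2m_3S, m_1m_2m_3S} is legal: the induced subgraph of Γ_P on the state and the induced subgraph on its complement are both nonempty and connected. -/

import Mathlib

/-- The binary coordinates of the 4-cube vertex labelled `l ∈ {1, …, 16}`; the labelling is
chosen so that `{1,3,6,8,10,12,13,15}` and `{2,4,5,7,9,11,14,16}` are the two classes of the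
bipartition of the 4-cube (even/odd coordinate sum). -/
def cubeBits (l : ℕ) : ℕ := if (l - 1) % 4 ≥ 2 then (l - 1) ^^^ 1 else l - 1

/-- The 1-skeleton `Γ_P` of the 24-cell on the labels `1, …, 24`: labels `1,…,16` are the
vertices of the 4-cube (adjacent when their coordinates differ in exactly one place) and
labels `17,…,24` are the extra vertices, one for each 3-dimensional facet of the 4-cube,
each joined to the 8 vertices of its facet. -/
def GammaP : SimpleGraph ℕ :=
  SimpleGraph.fromRel (fun u v =>
    (1 ≤ u ∧ u ≤ 16 ∧ 1 ≤ v ∧ v ≤ 16 ∧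
      (cubeBits u ^^^ cubeBits v) ∈ ({1, 2, 4, 8} : Finset ℕ)) ∨
    (1 ≤ u ∧ u ≤ 16 ∧ 17 ≤ v ∧ v ≤ 24 ∧
      (cubeBits u / 2 ^ ((v - 17) / 2)) % 2 = (v - 17) % 2))

/-- A state `T ⊆ {1, …, 24}` is legal if both the subgraph of `Γ_P` induced on `T` and the
subgraph induced on its complement `{1,…,24} \ T` are nonempty and connected
(`SimpleGraph.Connected` includes nonemptiness). -/
def LegalP (T : Finset ℕ) : Prop :=
  (GammaP.induce (T : Set ℕ)).Connected ∧
  (GammaP.induce ((Finset.Icc 1 24 \ T : Finset ℕ) : Set ℕ)).Connected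

/-- The moves of the Jankiewicz–Norin–Wise admissible system on the 24-cell graph. -/
def m1 : Finset ℕ := {1, 3, 6, 8, 10, 12, 13, 15}
def m2 : Finset ℕ := {2, 4, 5, 7, 9, 11, 14, 16}
def m3 : Finset ℕ := {17, 18, 19, 20, 21, 22, 23, 24}

/-- The starting state. -/
def S0 : Finset ℕ := {1, 2, 4, 6, 12, 14, 15, 16, 17, 18, 19, 20}


instance : DecidableRel GammaP.Adj := fun u v => by
  unfold GammaP
  rw [SimpleGraph.fromRel_adj]
  infer_instance

def Spans : List ℕ → Prop
  | [] => False
  | [_] => True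
  | a :: l => (∃ b ∈ l, GammaP.Adj a b) ∧ Spans l

instance : DecidablePred Spans := fun l => by
  induction l with
  | nil => exact .isFalse (by simp [Spans])
  | cons a l ih =>
    cases l with
    | nil => exact .isTrue trivial
    | cons b t => exact @instDecidableAnd _ _ _ ih

lemma conn_singleton (a : ℕ) : (GammaP.induce {x | x ∈ [a]}).Connected := by
  rw [SimpleGraph.connected_iff]
  refine ⟨fun x y => ?_, ⟨⟨a, by simp⟩⟩⟩
  obtain ⟨u, hu⟩ := x; obtain ⟨v, hv⟩ := y
  simp only [List.mem_singleton, Set.mem_setOf_eq] at hu hv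
  subst hu; subst hv
  exact SimpleGraph.Reachable.refl _

lemma conn_of_spans : ∀ l : List ℕ, Spans l → (GammaP.induce {x | x ∈ l}).Connected := by
  intro l
  induction l with
  | nil => intro h; exact absurd h (by simp [Spans])
  | cons a l ih =>
    intro h
    cases l with
    | nil => exact conn_singleton a
    | cons b t =>
      obtain ⟨⟨c, hc, hadj⟩, hs⟩ := h
      have key := SimpleGraph.connected_induce_union (G := GammaP)
        (s := {x | x ∈ [a]}) (t := {x | x ∈ b :: t})
        (conn_singleton a).preconnected (ih hs).preconnected (by simp) hc hadj
      have heq : ({x | x ∈ [a]} ∪ {x | x ∈ b :: t}) = {x | x ∈ a :: b :: t} := by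
        ext x; simp [or_assoc]
      rwa [heq] at key

lemma conn_of_list (T : Finset ℕ) (l : List ℕ) (h : T = l.toFinset) (hs : Spans l) :
    (GammaP.induce (T : Set ℕ)).Connected := by
  have := conn_of_spans l hs
  rwa [h, List.coe_toFinset]

lemma legal_of (T : Finset ℕ) (l1 l2 : List ℕ) (h1 : T = l1.toFinset)
    (h2 : Finset.Icc 1 24 \ T = l2.toFinset) (s1 : Spans l1) (s2 : Spans l2) : LegalP T :=
  ⟨conn_of_list T l1 h1 s1, conn_of_list _ l2 h2 s2⟩

/-- For the 24-cell graph `Γ_P` with the moves `m₁, m₂, m₃` acting on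
states by symmetric difference and starting state `S`, every state in the orbit
`{S, m₁S, m₂S, m₃S, m₁m₂S, m₁m₃S, m₂m₃S, m₁m₂m₃S}` is legal. -/
theorem stmt4 :
    LegalP S0 ∧
    LegalP (symmDiff m1 S0) ∧
    LegalP (symmDiff m2 S0) ∧
    LegalP (symmDiff m3 S0) ∧
    LegalP (symmDiff m1 (symmDiff m2 S0)) ∧
    LegalP (symmDiff m1 (symmDiff m3 S0)) ∧
    LegalP (symmDiff m2 (symmDiff m3 S0)) ∧
    LegalP (symmDiff m1 (symmDiff m2 (symmDiff m3 S0))) := by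
  refine ⟨?_, ?_, ?_, ?_, ?_, ?_, ?_, ?_⟩
  · refine legal_of _ [20,19,18,17,16,15,14,12,6,4,2,1] [24,23,22,21,13,9,10,11,5,8,7,3] ?_ ?_ ?_ ?_ <;> decide
  · refine legal_of _ [20,19,18,17,16,13,14,10,8,4,3,2] [24,23,22,21,15,11,12,9,7,6,5,1] ?_ ?_ ?_ ?_ <;> decide
  · refine legal_of _ [20,19,18,17,15,11,12,9,7,6,5,1] [24,23,22,21,16,13,14,10,8,4,3,2] ?_ ?_ ?_ ?_ <;> decide
  · refine legal_of _ [24,23,22,21,16,15,14,12,6,4,2,1] [20,19,18,17,13,9,10,11,5,8,7,3] ?_ ?_ ?_ ?_ <;> decide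
  · refine legal_of _ [20,19,18,17,13,9,10,11,5,8,7,3] [24,23,22,21,16,15,14,12,6,4,2,1] ?_ ?_ ?_ ?_ <;> decide
  · refine legal_of _ [24,23,22,21,16,13,14,10,8,4,3,2] [20,19,18,17,15,11,12,9,7,6,5,1] ?_ ?_ ?_ ?_ <;> decide
  · refine legal_of _ [24,23,22,21,15,11,12,9,7,6,5,1] [20,19,18,17,16,13,14,10,8,4,3,2] ?_ ?_ ?_ ?_ <;> decide
  · refine legal_of _ [24,23,22,21,13,9,10,11,5,8,7,3] [20,19,18,17,16,15,14,12,6,4,2,1] ?_ ?_ ?_ ?_ <;> decide
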